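/- Let γ > 0 and ε > 0, and let h : [0, ∞) → ℝ be nondecreasing, concave, differentiable on (0, ∞), with h(0) = 0, satisfying x·h′(x/γ) ≥ (1 + ε)·h(x) for all x > 0, and such that for every x ≥ 0 the map y ↦ y·h(x/y) is nondecreasing in y on (0, ∞). Let m > 0, c_min > 0 and c_u ≥ c_min. Let (c_i), (v_i), (a_i), indexed by a finite set I, satisfy c_i > 0 and 0 ≤ a_i ≤ v_i, let A := ∑_{i∈I} a_i, and assume A ≥ m and γ·v_i/c_i ≤ A/c_u for every i with a_i > 0. Then c_u·h(A/c_u) + ∑_{i∈I} c_i·h((v_i − a_i)/c_i) − ∑_{i∈I} c_i·h(v_i/c_i) ≤ −ε·c_min·h(m/c_min). -/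

import Mathlib

open Finset

lemma key_slope_lemma (h : ℝ → ℝ) (hconc : ConcaveOn ℝ (Set.Ici 0) h)
    (hdiff : DifferentiableOn ℝ h (Set.Ioi 0))
    {u w t : ℝ} (hu : 0 ≤ u) (huw : u < w) (hwt : w ≤ t) :
    (w - u) * deriv h t ≤ h w - h u := by
  have hw0 : 0 < w := lt_of_le_of_lt hu huw
  have ht0 : 0 < t := lt_of_lt_of_le hw0 hwt
  have hdAt : ∀ x : ℝ, 0 < x → DifferentiableAt ℝ h x := fun x hx =>
    (hdiff x hx).differentiableAt (isOpen_Ioi.mem_nhds hx)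
  have hanti : AntitoneOn (deriv h) (Set.Ioi 0) :=
    (hconc.subset Set.Ioi_subset_Ici_self (convex_Ioi 0)).antitoneOn_deriv
      (fun x hx => hdAt x hx)
  have h1 : deriv h t ≤ deriv h w := hanti hw0 ht0 hwt
  have h2 : deriv h w ≤ slope h u w :=
    hconc.deriv_le_slope hu (le_of_lt hw0) huw (hdAt w hw0)
  have h3 : deriv h t ≤ (h w - h u) / (w - u) := by
    have h12 := h1.trans h2
    rwa [slope_def_field] at h12
  have hwu : 0 < w - u := by linarith
  calc (w - u) * deriv h t ≤ (w - u) * ((h w - h u) / (w - u)) := by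
        exact mul_le_mul_of_nonneg_left h3 (le_of_lt hwu)
    _ = h w - h u := by field_simp

/-- Potential decrease during a `γ`-move for general costs: for a nondecreasing concave `h`
with `h(0) = 0`, differentiable on `(0,∞)`, satisfying `x·h′(x/γ) ≥ (1+ε)h(x)` and such that
`y ↦ y·h(x/y)` is nondecreasing, a legal `γ`-move decreases the potential by at least
`ε·c_min·h(m/c_min)`. -/
theorem weighted_gamma_move_decrease (γ ε : ℝ) (hγ : 0 < γ) (hε : 0 < ε)
    (h : ℝ → ℝ)
    (hmono : ∀ x y : ℝ, 0 ≤ x → x ≤ y → h x ≤ h y)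
    (hconc : ConcaveOn ℝ (Set.Ici 0) h)
    (hdiff : DifferentiableOn ℝ h (Set.Ioi 0))
    (h0 : h 0 = 0)
    (hgrow : ∀ x : ℝ, 0 < x → (1 + ε) * h x ≤ x * deriv h (x / γ))
    (hscale : ∀ x : ℝ, 0 ≤ x → ∀ y z : ℝ, 0 < y → y ≤ z → y * h (x / y) ≤ z * h (x / z))
    (m cmin cu : ℝ) (hm : 0 < m) (hcmin : 0 < cmin) (hcu : cmin ≤ cu)
    {ι : Type*} (I : Finset ι) (c v a : ι → ℝ)
    (hc : ∀ i ∈ I, 0 < c i)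
    (ha : ∀ i ∈ I, 0 ≤ a i ∧ a i ≤ v i)
    (hA : m ≤ ∑ i ∈ I, a i)
    (hmove : ∀ i ∈ I, 0 < a i → γ * v i / c i ≤ (∑ i' ∈ I, a i') / cu) :
    cu * h ((∑ i ∈ I, a i) / cu)
        + ∑ i ∈ I, c i * h ((v i - a i) / c i)
        - ∑ i ∈ I, c i * h (v i / c i)
      ≤ -(ε * cmin * h (m / cmin)) := by
  set A := ∑ i ∈ I, a i with hAdef
  have hcu0 : 0 < cu := lt_of_lt_of_le hcmin hcu
  have hA0 : 0 < A := lt_of_lt_of_le hm hA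
  have hAcu : 0 < A / cu := div_pos hA0 hcu0
  set X := A / cu / γ with hXdef
  -- per-index inequality
  have hstep : ∀ i ∈ I, a i * deriv h X ≤ c i * h (v i / c i) - c i * h ((v i - a i) / c i) := by
    intro i hi
    obtain ⟨hai0, haiv⟩ := ha i hi
    have hci := hc i hi
    rcases eq_or_lt_of_le hai0 with heq | hpos
    · simp [← heq]
    · have hu : (0:ℝ) ≤ (v i - a i) / c i := div_nonneg (by linarith) hci.le
      have huw : (v i - a i) / c i < v i / c i := by
        gcongr
        linarith
      have hwt : v i / c i ≤ X := by
        have := hmove i hi hpos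
        rw [hXdef]
        rw [le_div_iff₀ hγ]
        calc v i / c i * γ = γ * v i / c i := by ring
          _ ≤ A / cu := this
      have := key_slope_lemma h hconc hdiff hu huw hwt
      have h2 : (v i / c i - (v i - a i) / c i) = a i / c i := by field_simp; ring
      rw [h2] at this
      calc a i * deriv h X = c i * (a i / c i * deriv h X) := by field_simp
        _ ≤ c i * (h (v i / c i) - h ((v i - a i) / c i)) :=
            mul_le_mul_of_nonneg_left this hci.le
        _ = c i * h (v i / c i) - c i * h ((v i - a i) / c i) := by ring
  have hsum : A * deriv h X ≤ ∑ i ∈ I, (c i * h (v i / c i) - c i * h ((v i - a i) / c i)) := by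
    rw [hAdef, Finset.sum_mul]
    exact Finset.sum_le_sum hstep
  rw [Finset.sum_sub_distrib] at hsum
  -- growth
  have hg := hgrow (A / cu) hAcu
  have hg' : (1 + ε) * (cu * h (A / cu)) ≤ A * deriv h X := by
    have := mul_le_mul_of_nonneg_left hg hcu0.le
    calc (1 + ε) * (cu * h (A / cu)) = cu * ((1 + ε) * h (A / cu)) := by ring
      _ ≤ cu * (A / cu * deriv h (A / cu / γ)) := this
      _ = A * deriv h X := by rw [hXdef]; field_simp
  -- scaling
  have hsc : cmin * h (m / cmin) ≤ cu * h (A / cu) := by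
    calc cmin * h (m / cmin) ≤ cu * h (m / cu) := hscale m hm.le cmin cu hcmin hcu
      _ ≤ cu * h (A / cu) := by
          apply mul_le_mul_of_nonneg_left _ hcu0.le
          apply hmono _ _ (div_nonneg hm.le hcu0.le)
          gcongr
  nlinarith [mul_le_mul_of_nonneg_left hsc hε.le]
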